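/- Expected codimension is invariant under matroid duality with complemented collections: if 𝔖 ⊆ P(E) and 𝔖' = {E∖S : S ∈ 𝔖}, then ec_𝔖(M) = ec_{𝔖'}(M*), and for S ∈ 𝔖, a_𝔖(S) computed in M equals b_{𝔖'}(E∖S) computed in M*. -/

import Mathlib

def RankAxioms {α : Type*} [DecidableEq α] (E : Finset α) (rk : Finset α → ℕ) : Prop :=
  rk ∅ = 0 ∧
  (∀ F ⊆ E, ∀ x ∈ E, rk (insert x F) = rk F ∨ rk (insert x F) = rk F + 1) ∧
  (∀ F ⊆ E, ∀ x ∈ E, ∀ y ∈ E,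
    rk (insert x F) = rk F → rk (insert y F) = rk F → rk (insert x (insert y F)) = rk F)

/-- The Möbius function of the inclusion poset on the collection `𝔖`. -/
def mob {α : Type*} [DecidableEq α] (𝔖 : Finset (Finset α)) (T S : Finset α) : ℤ :=
  if T = S then 1
  else if T ∈ 𝔖 ∧ S ∈ 𝔖 ∧ T ⊆ S then
    - ∑ U ∈ (𝔖.filter fun U => T ⊆ U ∧ U ⊂ S).attach, mob 𝔖 T U.1
  else 0
termination_by S.card
decreasing_by
  exact Finset.card_lt_card (Finset.mem_filter.mp U.2).2.2

/-- `c(S) = #S − rk S` for a (ℤ-valued) rank function. -/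
def cZ {α : Type*} (rkZ : Finset α → ℤ) (S : Finset α) : ℤ :=
  (S.card : ℤ) - rkZ S

/-- `a_𝔖(S) = Σ_{T ∈ 𝔖} c(T) μ_𝔖(T,S)`. -/
def aZ {α : Type*} [DecidableEq α] (𝔖 : Finset (Finset α)) (rkZ : Finset α → ℤ)
    (S : Finset α) : ℤ :=
  ∑ T ∈ 𝔖, cZ rkZ T * mob 𝔖 T S

/-- `b_𝔖(T) = Σ_{S ∈ 𝔖} (k − rk S) μ_𝔖(T,S)`. -/
def bZ {α : Type*} [DecidableEq α] (𝔖 : Finset (Finset α)) (rkZ : Finset α → ℤ)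
    (k : ℤ) (T : Finset α) : ℤ :=
  ∑ S ∈ 𝔖, (k - rkZ S) * mob 𝔖 T S

/-- `ec_𝔖(M) = Σ_{S,T ∈ 𝔖} c(T)(k − rk S) μ_𝔖(T,S)`. -/
def ecZ {α : Type*} [DecidableEq α] (𝔖 : Finset (Finset α)) (rkZ : Finset α → ℤ)
    (k : ℤ) : ℤ :=
  ∑ S ∈ 𝔖, ∑ T ∈ 𝔖, cZ rkZ T * (k - rkZ S) * mob 𝔖 T S

lemma mob_self {α : Type*} [DecidableEq α] (𝔖 : Finset (Finset α)) (S : Finset α) :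
    mob 𝔖 S S = 1 := by
  rw [mob]; simp

lemma mob_of_not_subset {α : Type*} [DecidableEq α] (𝔖 : Finset (Finset α)) {T S : Finset α}
    (h : ¬ T ⊆ S) : mob 𝔖 T S = 0 := by
  rw [mob]
  have : T ≠ S := by rintro rfl; exact h subset_rfl
  simp [this, h]

lemma mob_rec {α : Type*} [DecidableEq α] (𝔖 : Finset (Finset α)) {T S : Finset α}
    (hT : T ∈ 𝔖) (hS : S ∈ 𝔖) (hTS : T ⊆ S) (hne : T ≠ S) :
    mob 𝔖 T S = - ∑ U ∈ 𝔖.filter fun U => T ⊆ U ∧ U ⊂ S, mob 𝔖 T U := by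
  rw [mob]
  simp only [hne, if_false, hT, hS, hTS, and_self, if_true, true_and]
  rw [Finset.sum_attach]
lemma mob_row {α : Type*} [DecidableEq α] (𝔖 : Finset (Finset α)) {T S : Finset α}
    (hT : T ∈ 𝔖) (hS : S ∈ 𝔖) (hTS : T ⊆ S) :
    ∑ U ∈ 𝔖.filter fun U => T ⊆ U ∧ U ⊆ S, mob 𝔖 T U = if T = S then 1 else 0 := by
  by_cases hne : T = S
  · subst hne
    have : 𝔖.filter (fun U => T ⊆ U ∧ U ⊆ T) = {T} := by
      ext U
      simp only [Finset.mem_filter, Finset.mem_singleton]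
      constructor
      · rintro ⟨_, h1, h2⟩; exact subset_antisymm h2 h1
      · rintro rfl; exact ⟨hT, subset_rfl, subset_rfl⟩
    rw [this]; simp [mob_self]
  · have hsplit : 𝔖.filter (fun U => T ⊆ U ∧ U ⊆ S)
        = insert S (𝔖.filter fun U => T ⊆ U ∧ U ⊂ S) := by
      ext U
      simp only [Finset.mem_filter, Finset.mem_insert]
      constructor
      · rintro ⟨hU, h1, h2⟩
        rcases eq_or_ne U S with rfl | hUS
        · exact Or.inl rfl
        · exact Or.inr ⟨hU, h1, lt_of_le_of_ne h2 hUS⟩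
      · rintro (rfl | ⟨hU, h1, h2⟩)
        · exact ⟨hS, hTS, subset_rfl⟩
        · exact ⟨hU, h1, h2.subset⟩
    have hnotmem : S ∉ 𝔖.filter fun U => T ⊆ U ∧ U ⊂ S := by
      simp only [Finset.mem_filter]
      rintro ⟨_, _, h⟩
      exact (lt_irrefl _ h)
    rw [hsplit, Finset.sum_insert hnotmem, mob_rec 𝔖 hT hS hTS hne]
    simp [hne]

lemma mob_col {α : Type*} [DecidableEq α] (𝔖 : Finset (Finset α)) {T S : Finset α}
    (hT : T ∈ 𝔖) (hS : S ∈ 𝔖) (hTS : T ⊆ S) :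
    ∑ U ∈ 𝔖.filter fun U => T ⊆ U ∧ U ⊆ S, mob 𝔖 U S = if T = S then 1 else 0 := by
  classical
  -- matrices over the subtype
  set Mu : Matrix ↥𝔖 ↥𝔖 ℤ := fun t u => mob 𝔖 t.1 u.1 with hMu
  set Z : Matrix ↥𝔖 ↥𝔖 ℤ := fun u s => if u.1 ⊆ s.1 then 1 else 0 with hZ
  have hMuZ : Mu * Z = 1 := by
    ext t s
    simp only [Matrix.mul_apply]
    simp only [hMu, hZ, Matrix.one_apply]
    rw [show (∑ u : ↥𝔖, mob 𝔖 t.1 u.1 * if u.1 ⊆ s.1 then 1 else 0)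
        = ∑ u ∈ 𝔖.attach, mob 𝔖 t.1 u.1 * if u.1 ⊆ s.1 then 1 else 0 from rfl]
    rw [← Finset.sum_filter_add_sum_filter_not 𝔖.attach (fun u => t.1 ⊆ u.1 ∧ u.1 ⊆ s.1)]
    have h2 : ∑ u ∈ 𝔖.attach.filter (fun u => ¬(t.1 ⊆ u.1 ∧ u.1 ⊆ s.1)),
        mob 𝔖 t.1 u.1 * (if u.1 ⊆ s.1 then 1 else 0) = 0 := by
      apply Finset.sum_eq_zero
      intro u hu
      rcases Finset.mem_filter.mp hu with ⟨_, hcond⟩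
      by_cases h1 : u.1 ⊆ s.1
      · have : ¬ t.1 ⊆ u.1 := fun h => hcond ⟨h, h1⟩
        simp [mob_of_not_subset 𝔖 this]
      · simp [h1]
    rw [h2, add_zero]
    have h3 : ∑ u ∈ 𝔖.attach.filter (fun u => t.1 ⊆ u.1 ∧ u.1 ⊆ s.1),
        mob 𝔖 t.1 u.1 * (if u.1 ⊆ s.1 then 1 else 0)
        = ∑ u ∈ 𝔖.attach.filter (fun u => t.1 ⊆ u.1 ∧ u.1 ⊆ s.1), mob 𝔖 t.1 u.1 := by
      apply Finset.sum_congr rfl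
      intro u hu
      rcases Finset.mem_filter.mp hu with ⟨_, _, h1⟩
      simp [h1]
    rw [h3]
    by_cases hts : t.1 ⊆ s.1
    · have := mob_row 𝔖 t.2 s.2 hts
      rw [Finset.sum_filter, Finset.sum_attach 𝔖 (fun U => if t.1 ⊆ U ∧ U ⊆ s.1 then mob 𝔖 t.1 U else 0),
        ← Finset.sum_filter] at *
      rw [this]
      by_cases h : t = s
      · simp [h]
      · have : t.1 ≠ s.1 := fun hh => h (Subtype.ext hh)
        simp [h, this]
    · have hempty : ∀ u ∈ 𝔖.attach.filter (fun u => t.1 ⊆ u.1 ∧ u.1 ⊆ s.1),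
          mob 𝔖 t.1 u.1 = (0:ℤ) := by
        intro u hu
        rcases Finset.mem_filter.mp hu with ⟨_, h1, h2⟩
        exact absurd (h1.trans h2) hts
      rw [Finset.sum_eq_zero hempty]
      have : t ≠ s := fun h => hts (h ▸ subset_rfl)
      simp [this]
  have hZMu : Z * Mu = 1 := mul_eq_one_comm.mp hMuZ
  have key := congrFun (congrFun hZMu ⟨T, hT⟩) ⟨S, hS⟩
  simp only [Matrix.mul_apply] at key
  simp only [hMu, hZ, Matrix.one_apply] at key
  rw [show (∑ u : ↥𝔖, (if T ⊆ u.1 then (1:ℤ) else 0) * mob 𝔖 u.1 S)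
      = ∑ u ∈ 𝔖.attach, (if T ⊆ u.1 then (1:ℤ) else 0) * mob 𝔖 u.1 S from rfl] at key
  rw [Finset.sum_attach 𝔖 (fun U => (if T ⊆ U then (1:ℤ) else 0) * mob 𝔖 U S)] at key
  have : ∑ U ∈ 𝔖, (if T ⊆ U then (1:ℤ) else 0) * mob 𝔖 U S
      = ∑ U ∈ 𝔖.filter (fun U => T ⊆ U ∧ U ⊆ S), mob 𝔖 U S := by
    rw [Finset.sum_filter]
    apply Finset.sum_congr rfl
    intro U _
    by_cases h1 : T ⊆ U
    · by_cases h2 : U ⊆ S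
      · simp [h1, h2]
      · simp [h1, h2, mob_of_not_subset 𝔖 h2]
    · simp [h1]
  rw [this] at key
  rw [key]
  by_cases h : T = S
  · simp [h]
  · have : (⟨T, hT⟩ : ↥𝔖) ≠ ⟨S, hS⟩ := fun hh => h (congrArg Subtype.val hh)
    simp [h, this]
section Dual
variable {α : Type*} [DecidableEq α]

lemma compl_compl_eq {E S : Finset α} (h : S ⊆ E) : E \ (E \ S) = S :=
  Finset.sdiff_sdiff_eq_self h

lemma compl_subset_compl_iff {E S T : Finset α} (hS : S ⊆ E) (hT : T ⊆ E) :
    E \ S ⊆ E \ T ↔ T ⊆ S := by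
  constructor
  · intro h
    have := Finset.sdiff_subset_sdiff (le_refl E) h
    rwa [compl_compl_eq hS, compl_compl_eq hT] at this
  · intro h
    exact Finset.sdiff_subset_sdiff (le_refl E) h

lemma compl_inj {E S T : Finset α} (hS : S ⊆ E) (hT : T ⊆ E) (h : E \ S = E \ T) : S = T := by
  have := congrArg (fun X => E \ X) h
  simpa [compl_compl_eq hS, compl_compl_eq hT] using this

lemma compl_ssubset_compl_iff {E S T : Finset α} (hS : S ⊆ E) (hT : T ⊆ E) :
    E \ S ⊂ E \ T ↔ T ⊂ S := by
  rw [ssubset_iff_subset_ne, ssubset_iff_subset_ne, compl_subset_compl_iff hS hT]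
  constructor
  · rintro ⟨h1, h2⟩
    exact ⟨h1, fun hh => h2 (by rw [hh])⟩
  · rintro ⟨h1, h2⟩
    exact ⟨h1, fun hh => h2 (compl_inj hS hT hh).symm⟩

lemma mob_dual_aux (E : Finset α) (𝔖 : Finset (Finset α)) (h𝔖 : ∀ S ∈ 𝔖, S ⊆ E) :
    ∀ n : ℕ, ∀ T S : Finset α, T ∈ 𝔖 → S ∈ 𝔖 → (S \ T).card ≤ n →
      mob (𝔖.image fun X => E \ X) (E \ S) (E \ T) = mob 𝔖 T S := by
  intro n
  induction n with
  | zero =>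
    intro T S hT hS hcard
    by_cases hTS : T ⊆ S
    · have hST : S ⊆ T := by
        intro x hx
        by_contra hxT
        have : x ∈ S \ T := Finset.mem_sdiff.mpr ⟨hx, hxT⟩
        have := Finset.card_pos.mpr ⟨x, this⟩
        omega
      have : T = S := subset_antisymm hTS hST
      subst this
      rw [mob_self, mob_self]
    · rw [mob_of_not_subset _ hTS]
      apply mob_of_not_subset
      intro h
      exact hTS ((compl_subset_compl_iff (h𝔖 S hS) (h𝔖 T hT)).mp h)
  | succ n ih =>
    intro T S hT hS hcard
    by_cases hTS : T ⊆ S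
    · by_cases hne : T = S
      · subst hne; rw [mob_self, mob_self]
      · -- recursion case
        have hSE := h𝔖 S hS
        have hTE := h𝔖 T hT
        have hT' : E \ T ∈ 𝔖.image fun X => E \ X := Finset.mem_image_of_mem _ hT
        have hS' : E \ S ∈ 𝔖.image fun X => E \ X := Finset.mem_image_of_mem _ hS
        have hsub' : E \ S ⊆ E \ T := (compl_subset_compl_iff hSE hTE).mpr hTS
        have hne' : E \ S ≠ E \ T := fun h => hne (compl_inj hSE hTE h).symm
        rw [mob_rec _ hS' hT' hsub' hne']
        -- rewrite the filtered image
        have himg : (𝔖.image fun X => E \ X).filter (fun U => E \ S ⊆ U ∧ U ⊂ E \ T)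
            = (𝔖.filter fun U => T ⊂ U ∧ U ⊆ S).image fun X => E \ X := by
          ext U'
          simp only [Finset.mem_filter, Finset.mem_image]
          constructor
          · rintro ⟨⟨U, hU, rfl⟩, h1, h2⟩
            exact ⟨U, ⟨hU, (compl_ssubset_compl_iff (h𝔖 U hU) hTE).mp h2,
              (compl_subset_compl_iff hSE (h𝔖 U hU)).mp h1⟩, rfl⟩
          · rintro ⟨U, ⟨hU, h1, h2⟩, rfl⟩
            exact ⟨⟨U, hU, rfl⟩, (compl_subset_compl_iff hSE (h𝔖 U hU)).mpr h2,
              (compl_ssubset_compl_iff (h𝔖 U hU) hTE).mpr h1⟩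
        rw [himg, Finset.sum_image (fun x hx y hy h =>
          compl_inj (h𝔖 x (Finset.mem_filter.mp hx).1) (h𝔖 y (Finset.mem_filter.mp hy).1) h)]
        have hih : ∀ U ∈ 𝔖.filter fun U => T ⊂ U ∧ U ⊆ S,
            mob (𝔖.image fun X => E \ X) (E \ S) (E \ U) = mob 𝔖 U S := by
          intro U hU
          rcases Finset.mem_filter.mp hU with ⟨hU𝔖, h1, h2⟩
          apply ih U S hU𝔖 hS
          have hss : S \ U ⊂ S \ T := by
            rcases Finset.exists_of_ssubset h1 with ⟨x, hxU, hxT⟩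
            constructor
            · exact Finset.sdiff_subset_sdiff (le_refl S) h1.subset
            · intro hsub
              have hxS : x ∈ S := h2 hxU
              have : x ∈ S \ T := Finset.mem_sdiff.mpr ⟨hxS, hxT⟩
              have := hsub this
              exact (Finset.mem_sdiff.mp this).2 hxU
          have := Finset.card_lt_card hss
          omega
        rw [Finset.sum_congr rfl hih]
        -- now use mob_col
        have hcol := mob_col 𝔖 hT hS hTS
        have hsplit : 𝔖.filter (fun U => T ⊆ U ∧ U ⊆ S)
            = insert T (𝔖.filter fun U => T ⊂ U ∧ U ⊆ S) := by
          ext U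
          simp only [Finset.mem_filter, Finset.mem_insert]
          constructor
          · rintro ⟨hU, h1, h2⟩
            rcases eq_or_ne T U with rfl | hTU
            · exact Or.inl rfl
            · exact Or.inr ⟨hU, lt_of_le_of_ne h1 hTU, h2⟩
          · rintro (rfl | ⟨hU, h1, h2⟩)
            · exact ⟨hT, subset_rfl, hTS⟩
            · exact ⟨hU, h1.subset.trans (le_refl _), h2⟩
        have hTnot : T ∉ 𝔖.filter fun U => T ⊂ U ∧ U ⊆ S := by
          simp only [Finset.mem_filter]
          rintro ⟨_, h, _⟩
          exact lt_irrefl _ h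
        rw [hsplit, Finset.sum_insert hTnot, if_neg hne] at hcol
        linarith
    · rw [mob_of_not_subset _ hTS]
      apply mob_of_not_subset
      intro h
      exact hTS ((compl_subset_compl_iff (h𝔖 S hS) (h𝔖 T hT)).mp h)

lemma mob_dual (E : Finset α) (𝔖 : Finset (Finset α)) (h𝔖 : ∀ S ∈ 𝔖, S ⊆ E)
    {T S : Finset α} (hT : T ∈ 𝔖) (hS : S ∈ 𝔖) :
    mob (𝔖.image fun X => E \ X) (E \ S) (E \ T) = mob 𝔖 T S :=
  mob_dual_aux E 𝔖 h𝔖 (S \ T).card T S hT hS le_rfl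

end Dual

/-- Expected codimension is invariant under matroid duality with complemented
collections: `ec_𝔖(M) = ec_{𝔖'}(M*)` where `𝔖' = {E∖S : S ∈ 𝔖}`, the dual matroid
`M*` having rank function `S ↦ #S − k + rk (E∖S)` and rank `#E − k`; moreover
`a_𝔖(S)` computed in `M` equals `b_{𝔖'}(E∖S)` computed in `M*`. -/
theorem ec_dual_invariance {α : Type*} [DecidableEq α]
    (E : Finset α) (rk : Finset α → ℕ) (k : ℕ)
    (hrk : RankAxioms E rk) (hk : rk E = k)
    (𝔖 : Finset (Finset α)) (h𝔖 : ∀ S ∈ 𝔖, S ⊆ E) :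
    ecZ 𝔖 (fun S => (rk S : ℤ)) (k : ℤ)
      = ecZ (𝔖.image fun S => E \ S)
          (fun S => (S.card : ℤ) - k + rk (E \ S)) ((E.card : ℤ) - k) ∧
    ∀ S ∈ 𝔖,
      aZ 𝔖 (fun S => (rk S : ℤ)) S
        = bZ (𝔖.image fun S => E \ S)
            (fun S => (S.card : ℤ) - k + rk (E \ S)) ((E.card : ℤ) - k) (E \ S) := by
  have hinj : ∀ x ∈ 𝔖, ∀ y ∈ 𝔖, E \ x = E \ y → x = y :=
    fun x hx y hy h => compl_inj (h𝔖 x hx) (h𝔖 y hy) h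
  -- key scalar computations
  have hcZ' : ∀ T ∈ 𝔖, cZ (fun S => (S.card : ℤ) - k + rk (E \ S)) (E \ T)
      = (k : ℤ) - rk T := by
    intro T hT
    simp only [cZ, compl_compl_eq (h𝔖 T hT)]
    ring
  have hkr' : ∀ S ∈ 𝔖, ((E.card : ℤ) - k) - (((E \ S).card : ℤ) - k + rk (E \ (E \ S)))
      = cZ (fun S => (rk S : ℤ)) S := by
    intro S hS
    rw [compl_compl_eq (h𝔖 S hS), Finset.cast_card_sdiff (h𝔖 S hS)]
    simp only [cZ]
    ring
  constructor
  · -- ecZ part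
    unfold ecZ
    rw [Finset.sum_image hinj]
    conv_rhs => enter [2, S]; rw [Finset.sum_image hinj]
    rw [Finset.sum_comm]
    apply Finset.sum_congr rfl
    intro S hS
    apply Finset.sum_congr rfl
    intro T hT
    rw [hcZ' T hT, mob_dual E 𝔖 h𝔖 hS hT]
    have := hkr' S hS
    simp only [cZ] at this ⊢
    rw [this]
    ring
  · -- aZ = bZ part
    intro S hS
    unfold aZ bZ
    rw [Finset.sum_image hinj]
    apply Finset.sum_congr rfl
    intro T hT
    rw [mob_dual E 𝔖 h𝔖 hT hS]
    have h1 : ((E.card : ℤ) - k) - (((E \ T).card : ℤ) - k + rk (E \ (E \ T)))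
        = cZ (fun S => (rk S : ℤ)) T := hkr' T hT
    simp only [cZ] at h1 ⊢
    rw [h1]
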